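/- The set function ρ is supermodular (has increasing returns): for all Finsets A ⊆ B of ι and every x : ι with x ∉ B, ρ(A ∪ {x}) − ρ(A) ≤ ρ(B ∪ {x}) − ρ(B). Equivalently, for all Finsets A, B of ι, ρ(A) + ρ(B) ≤ ρ(A ∪ B) + ρ(A ∩ B). -/

import Mathlib

open Finset

variable {ι : Type*}

/-- Long-term SINR of the considered mobile station when served by the cluster `E`:
`ρ(E) = c / (σ² + ∑_{j ∈ univ \ E} w j)`. -/
noncomputable def rho [Fintype ι] [DecidableEq ι] (c σ2 : ℝ) (w : ι → ℝ) (E : Finset ι) : ℝ :=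
  c / (σ2 + ∑ j ∈ Finset.univ \ E, w j)

private lemma aux_frac1 (c a b wx : ℝ) (hc : 0 < c) (hwx : 0 ≤ wx)
    (hb : 0 < b - wx) (hab : b ≤ a) :
    c / (a - wx) - c / a ≤ c / (b - wx) - c / b := by
  have ha : 0 < a - wx := lt_of_lt_of_le hb (by linarith)
  have hb0 : 0 < b := by linarith
  have ha0 : 0 < a := by linarith
  rw [div_sub_div _ _ (ne_of_gt ha) (ne_of_gt ha0),
      div_sub_div _ _ (ne_of_gt hb) (ne_of_gt hb0)]
  have e : ∀ t : ℝ, c * t - (t - wx) * c = c * wx := fun t => by ring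
  rw [e a, e b]
  apply div_le_div_of_nonneg_left (by positivity) (by positivity)
  nlinarith

private lemma aux_frac2 (c a b u i : ℝ) (hc : 0 < c) (hu : 0 < u)
    (hua : u ≤ a) (hub : u ≤ b) (hsum : a + b = u + i) :
    c / a + c / b ≤ c / u + c / i := by
  have ha : 0 < a := lt_of_lt_of_le hu hua
  have hb : 0 < b := lt_of_lt_of_le hu hub
  have hi : 0 < i := by nlinarith
  rw [div_add_div _ _ (ne_of_gt ha) (ne_of_gt hb),
      div_add_div _ _ (ne_of_gt hu) (ne_of_gt hi)]
  rw [div_le_div_iff₀ (by positivity) (by positivity)]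
  have key : 0 ≤ (a - u) * (b - u) := mul_nonneg (by linarith) (by linarith)
  have hui : u * i ≤ a * b := by nlinarith [key]
  have h3 : c * ((a + b) * (u * i)) ≤ c * ((a + b) * (a * b)) :=
    mul_le_mul_of_nonneg_left
      (mul_le_mul_of_nonneg_left hui (by linarith)) hc.le
  have h4 : c * a * b * (a + b) = c * a * b * (u + i) := by rw [hsum]
  nlinarith [h3, h4]

theorem rho_supermodular [Fintype ι] [DecidableEq ι]
    (c σ2 : ℝ) (hc : 0 < c) (hσ : 0 < σ2) (w : ι → ℝ) (hw : ∀ j, 0 ≤ w j) :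
    (∀ A B : Finset ι, A ⊆ B → ∀ x : ι, x ∉ B →
      rho c σ2 w (A ∪ {x}) - rho c σ2 w A ≤ rho c σ2 w (B ∪ {x}) - rho c σ2 w B) ∧
    (∀ A B : Finset ι,
      rho c σ2 w A + rho c σ2 w B ≤ rho c σ2 w (A ∪ B) + rho c σ2 w (A ∩ B)) := by
  set f : Finset ι → ℝ := fun E => σ2 + ∑ j ∈ Finset.univ \ E, w j with hf
  have fpos : ∀ E, 0 < f E := fun E =>
    add_pos_of_pos_of_nonneg hσ (Finset.sum_nonneg fun j _ => hw j)
  have fmono : ∀ {A B : Finset ι}, A ⊆ B → f B ≤ f A := by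
    intro A B hAB
    have : Finset.univ \ B ⊆ Finset.univ \ A :=
      Finset.sdiff_subset_sdiff (Finset.Subset.refl _) hAB
    exact add_le_add_right
      (Finset.sum_le_sum_of_subset_of_nonneg this fun j _ _ => hw j) _
  have finsert : ∀ (E : Finset ι) (x : ι), x ∉ E → f (E ∪ {x}) = f E - w x := by
    intro E x hx
    have hmem : x ∈ Finset.univ \ E := by simp [hx]
    have hset : Finset.univ \ (E ∪ {x}) = (Finset.univ \ E).erase x := by
      ext y
      simp [Finset.mem_sdiff, Finset.mem_erase, and_comm, or_comm, and_assoc]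
      try tauto
    simp only [hf, hset]
    rw [Finset.sum_erase_eq_sub hmem]
    ring
  have hrho : ∀ E, rho c σ2 w E = c / f E := fun E => rfl
  constructor
  · intro A B hAB x hxB
    have hxA : x ∉ A := fun h => hxB (hAB h)
    rw [hrho, hrho, hrho, hrho, finsert A x hxA, finsert B x hxB]
    have hBx : 0 < f B - w x := by
      rw [← finsert B x hxB]; exact fpos _
    exact aux_frac1 c (f A) (f B) (w x) hc (hw x) hBx (fmono hAB)
  · intro A B
    rw [hrho, hrho, hrho, hrho]
    have hsum : f A + f B = f (A ∪ B) + f (A ∩ B) := by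
      simp only [hf]
      have h1 : Finset.univ \ (A ∪ B) = (Finset.univ \ A) ∩ (Finset.univ \ B) := by
        ext y; simp [Finset.mem_sdiff]; try tauto
      have h2 : Finset.univ \ (A ∩ B) = (Finset.univ \ A) ∪ (Finset.univ \ B) := by
        ext y; simp [Finset.mem_sdiff]; try tauto
      have h3 : ∑ j ∈ (Finset.univ \ A) ∪ (Finset.univ \ B), w j
          + ∑ j ∈ (Finset.univ \ A) ∩ (Finset.univ \ B), w j
          = ∑ j ∈ Finset.univ \ A, w j + ∑ j ∈ Finset.univ \ B, w j :=
        Finset.sum_union_inter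
      rw [h1, h2]
      linarith
    exact aux_frac2 c (f A) (f B) (f (A ∪ B)) (f (A ∩ B)) hc (fpos _)
      (fmono Finset.subset_union_left) (fmono Finset.subset_union_right)
      (by linarith)
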